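/- Let A be a ring, I an injective left A-module, and M a cochain complex of left A-modules. Then for every n ∈ ℤ there is an isomorphism H^n(Hom_A(M, I)) ≅ Hom_A(H^{-n}(M), I), natural in M. -/

import Mathlib

universe u

open CategoryTheory

variable (A : Type u) [Ring A]

/-- The `Hom` complex `Hom_A(M, I)` of a cochain complex `M` of left `A`-modules into a
single left `A`-module `I`: its degree `n` component is the abelian group
`Hom_A(M^{-n}, I)`, with differential given by precomposition with the differential
of `M`. -/
noncomputable def homCplx (M : CochainComplex (ModuleCat.{u} A) ℤ) (I : ModuleCat.{u} A) :
    CochainComplex AddCommGrpCat.{u} ℤ :=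
  CochainComplex.of (fun n => AddCommGrpCat.of ((M.X (-n)) →ₗ[A] I))
    (fun n => AddCommGrpCat.ofHom
      { toFun := fun f => f ∘ₗ ((M.d (-(n + 1)) (-n)).hom : M.X (-(n+1)) →ₗ[A] M.X (-n))
        map_zero' := by ext x; simp
        map_add' := by intro f g; ext x; simp })
    (fun n => by
      ext f x
      have h := M.d_comp_d (-(n + 1 + 1)) (-(n + 1)) (-n)
      have hx : (M.d (-(n+1)) (-n)).hom ((M.d (-(n+1+1)) (-(n+1))).hom x) = 0 := by
        have h2 := congrArg (fun g => g.hom x) h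
        simpa only [ModuleCat.hom_comp, LinearMap.comp_apply, ModuleCat.hom_zero,
          LinearMap.zero_apply] using h2
      simp [hx])

/-- The map of `Hom` complexes `Hom_A(N, I) ⟶ Hom_A(M, I)` induced by precomposition with
a chain map `φ : M ⟶ N`. -/
noncomputable def homCplxMap {M N : CochainComplex (ModuleCat.{u} A) ℤ} (φ : M ⟶ N)
    (I : ModuleCat.{u} A) : homCplx A N I ⟶ homCplx A M I where
  f n := AddCommGrpCat.ofHom
    { toFun := fun f => f ∘ₗ ((φ.f (-n)).hom : M.X (-n) →ₗ[A] N.X (-n))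
      map_zero' := by ext x; simp
      map_add' := by intro f g; ext x; simp }
  comm' := by
    intro i j hij
    obtain rfl : i + 1 = j := hij
    ext f
    apply LinearMap.ext
    intro x
    have h := φ.comm (-(i + 1)) (-i)
    have hx : (φ.f (-i)).hom ((M.d (-(i+1)) (-i)).hom x) = (N.d (-(i+1)) (-i)).hom ((φ.f (-(i+1))).hom x) := by
      have h2 := congrArg (fun g => g.hom x) h
      simpa only [ModuleCat.hom_comp, LinearMap.comp_apply] using h2.symm
    simp [homCplx]
    exact congrArg (fun y => (show N.X (-i) →ₗ[A] I from f) y) hx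

/-- Precomposition `Hom_A(Y, I) ⟶ Hom_A(X, I)` with a linear map `g : X ⟶ Y`, as a
morphism of abelian groups. -/
noncomputable def precompHom {X Y : ModuleCat.{u} A} (g : X ⟶ Y) (I : ModuleCat.{u} A) :
    AddCommGrpCat.of ((Y : Type u) →ₗ[A] I) ⟶ AddCommGrpCat.of ((X : Type u) →ₗ[A] I) :=
  AddCommGrpCat.ofHom
    { toFun := fun f => f ∘ₗ (g.hom : X →ₗ[A] Y)
      map_zero' := by ext x; simp
      map_add' := by intro f g; ext x; simp }


open Limits in
noncomputable def YF (I : ModuleCat.{u} A) : (ModuleCat.{u} A)ᵒᵖ ⥤ AddCommGrpCat.{u} where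
  obj X := AddCommGrpCat.of ((X.unop : Type u) →ₗ[A] I)
  map f := precompHom A f.unop I
  map_id X := by ext f x; rfl
  map_comp f g := by ext h x; rfl

instance YF_additive (I : ModuleCat.{u} A) : (YF A I).Additive where
  map_add := by
    intro X Y f g; ext h
    revert h
    intro (h : (X.unop : Type u) →ₗ[A] I)
    apply LinearMap.ext; intro x
    change h ((f.unop.hom + g.unop.hom) x) = h (f.unop.hom x) + h (g.unop.hom x)
    simp

noncomputable def eYF (I : ModuleCat.{u} A) : preadditiveYoneda.obj I ≅ YF A I :=
  NatIso.ofComponents (fun X => (ModuleCat.homAddEquiv (M := X.unop) (N := I)).toAddCommGrpIso)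
    (by intro X Y f; ext g x; rfl)

lemma homCplx_d (M : CochainComplex (ModuleCat.{u} A) ℤ) (I : ModuleCat.{u} A)
    (i j : ℤ) (h : i + 1 = j) :
    (homCplx A M I).d i j = (YF A I).map ((M.d (-j) (-i)).op) := by
  subst h
  ext f
  simp [homCplx, CochainComplex.of.d, precompHom, YF]

/-- The short complex `M.X (-(n+1)) ⟶ M.X (-n) ⟶ M.X (-(n-1))`. -/
noncomputable abbrev SM (M : CochainComplex (ModuleCat.{u} A) ℤ) (n : ℤ) :
    ShortComplex (ModuleCat.{u} A) :=
  M.sc' (-(n+1)) (-n) (-(n-1))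

noncomputable def isoC (I : ModuleCat.{u} A) (M : CochainComplex (ModuleCat.{u} A) ℤ) (n : ℤ) :
    (homCplx A M I).sc' (n-1) n (n+1) ≅ (SM A M n).op.map (YF A I) :=
  ShortComplex.isoMk (Iso.refl _) (Iso.refl _) (Iso.refl _)
    (by
      dsimp [SM]
      erw [Category.comp_id, Category.id_comp]
      exact (homCplx_d A M I (n-1) n (by ring)).symm)
    (by
      dsimp [SM]
      erw [Category.comp_id, Category.id_comp]
      exact (homCplx_d A M I n (n+1) rfl).symm)

noncomputable def e₁ (I : ModuleCat.{u} A) (M : CochainComplex (ModuleCat.{u} A) ℤ) (n : ℤ) :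
    (homCplx A M I).sc n ≅ (SM A M n).op.map (YF A I) :=
  (homCplx A M I).isoSc' (n-1) n (n+1) (by simp [CochainComplex.prev])
    (by simp [CochainComplex.next]) ≪≫ isoC A I M n

open Limits in
lemma yfPH (I : ModuleCat.{u} A) (hI : Module.Injective A I) :
    (YF A I).PreservesHomology := by
  haveI : Injective I := Module.injective_object_of_injective_module A I (inj := hI)
  haveI : PreservesFiniteColimits
      (preadditiveYonedaObj I ⋙ forget₂ (ModuleCat.{u} (End I)) AddCommGrpCat.{u}) :=
    Limits.comp_preservesFiniteColimits _ _
  haveI : PreservesFiniteColimits (preadditiveYoneda.obj I) :=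
    (inferInstance : PreservesFiniteColimits
      (preadditiveYonedaObj I ⋙ forget₂ (ModuleCat.{u} (End I)) AddCommGrpCat.{u}))
  haveI := preservesFiniteColimits_of_natIso (eYF A I)
  haveI := preservesFiniteLimits_of_natIso (eYF A I)
  exact Functor.preservesHomologyOfExact _

noncomputable def eIso (I : ModuleCat.{u} A) (hI : Module.Injective A I)
    (M : CochainComplex (ModuleCat.{u} A) ℤ) (n : ℤ) :
    (homCplx A M I).homology n ≅ AddCommGrpCat.of ((M.homology (-n) : Type u) →ₗ[A] I) :=
  haveI := yfPH A I hI
  ShortComplex.homologyMapIso (e₁ A I M n) ≪≫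
    ShortComplex.mapHomologyIso (SM A M n).op (YF A I) ≪≫
    (YF A I).mapIso ((SM A M n).homologyOpIso ≪≫
      (ShortComplex.homologyMapIso
        (M.isoSc' (-(n+1)) (-n) (-(n-1))
          (by simp [CochainComplex.prev]; ring) (by simp [CochainComplex.next]; ring))).op)

noncomputable def ψaux {M N : CochainComplex (ModuleCat.{u} A) ℤ} (φ : M ⟶ N) (n : ℤ) :
    SM A M n ⟶ SM A N n :=
  (HomologicalComplex.shortComplexFunctor' (ModuleCat.{u} A) (ComplexShape.up ℤ)
    (-(n+1)) (-n) (-(n-1))).map φ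

noncomputable def ψY (I : ModuleCat.{u} A) {M N : CochainComplex (ModuleCat.{u} A) ℤ}
    (φ : M ⟶ N) (n : ℤ) : (SM A N n).op.map (YF A I) ⟶ (SM A M n).op.map (YF A I) :=
  (YF A I).mapShortComplex.map (ShortComplex.opMap (ψaux A φ n))

lemma ψY_nat_assoc (I : ModuleCat.{u} A) (hI : Module.Injective A I)
    {M N : CochainComplex (ModuleCat.{u} A) ℤ} (φ : M ⟶ N) (n : ℤ) {Z : AddCommGrpCat.{u}}
    (h : (YF A I).obj (SM A M n).op.homology ⟶ Z) :
    haveI := yfPH A I hI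
    ShortComplex.homologyMap (ψY A I φ n) ≫ ((SM A M n).op.mapHomologyIso (YF A I)).hom ≫ h =
      ((SM A N n).op.mapHomologyIso (YF A I)).hom ≫
        (YF A I).map (ShortComplex.homologyMap (ShortComplex.opMap (ψaux A φ n))) ≫ h := by
  haveI := yfPH A I hI
  have hn : ShortComplex.homologyMap (ψY A I φ n) ≫ ((SM A M n).op.mapHomologyIso (YF A I)).hom =
      ((SM A N n).op.mapHomologyIso (YF A I)).hom ≫
        (YF A I).map (ShortComplex.homologyMap (ShortComplex.opMap (ψaux A φ n))) :=
    ShortComplex.mapHomologyIso_hom_naturality _ _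
  rw [← Category.assoc, hn, Category.assoc]

lemma isoC_nat (I : ModuleCat.{u} A) {M N : CochainComplex (ModuleCat.{u} A) ℤ}
    (φ : M ⟶ N) (n : ℤ) :
    (HomologicalComplex.shortComplexFunctor' AddCommGrpCat.{u} (ComplexShape.up ℤ)
        (n-1) n (n+1)).map (homCplxMap A φ I) ≫ (isoC A I M n).hom =
      (isoC A I N n).hom ≫ ψY A I φ n := by
  ext <;> · dsimp [isoC, ψaux, ψY]; rfl

lemma e₁_nat (I : ModuleCat.{u} A) {M N : CochainComplex (ModuleCat.{u} A) ℤ}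
    (φ : M ⟶ N) (n : ℤ) :
    (HomologicalComplex.shortComplexFunctor AddCommGrpCat.{u} (ComplexShape.up ℤ) n).map
        (homCplxMap A φ I) ≫ (e₁ A I M n).hom =
      (e₁ A I N n).hom ≫ ψY A I φ n := by
  dsimp only [e₁, Iso.trans_hom, HomologicalComplex.isoSc']
  simp only [Iso.app_hom]
  rw [← Category.assoc,
    (HomologicalComplex.natIsoSc' AddCommGrpCat.{u} (ComplexShape.up ℤ) (n-1) n (n+1)
      (by simp [CochainComplex.prev]) (by simp [CochainComplex.next])).hom.naturality
      (homCplxMap A φ I),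
    Category.assoc, isoC_nat]
  exact (Category.assoc _ _ _).symm

noncomputable def ψX (I : ModuleCat.{u} A) {M N : CochainComplex (ModuleCat.{u} A) ℤ}
    (φ : M ⟶ N) (n : ℤ) : (homCplx A N I).sc n ⟶ (homCplx A M I).sc n :=
  (HomologicalComplex.shortComplexFunctor AddCommGrpCat.{u} (ComplexShape.up ℤ) n).map
    (homCplxMap A φ I)

lemma e₁_nat' (I : ModuleCat.{u} A) {M N : CochainComplex (ModuleCat.{u} A) ℤ}
    (φ : M ⟶ N) (n : ℤ) :
    ψX A I φ n ≫ (e₁ A I M n).hom = (e₁ A I N n).hom ≫ ψY A I φ n :=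
  e₁_nat A I φ n

noncomputable def ψZ {M N : CochainComplex (ModuleCat.{u} A) ℤ} (φ : M ⟶ N) (n : ℤ) :
    M.sc (-n) ⟶ N.sc (-n) :=
  (HomologicalComplex.shortComplexFunctor (ModuleCat.{u} A) (ComplexShape.up ℤ) (-n)).map φ

lemma main_nat_aux (I : ModuleCat.{u} A) (hI : Module.Injective A I)
    (M N : CochainComplex (ModuleCat.{u} A) ℤ) (φ : M ⟶ N) (n : ℤ) :
    haveI := yfPH A I hI
    ShortComplex.homologyMap (ψX A I φ n) ≫ (ShortComplex.homologyMapIso (e₁ A I M n) ≪≫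
      ShortComplex.mapHomologyIso (SM A M n).op (YF A I) ≪≫
      (YF A I).mapIso ((SM A M n).homologyOpIso ≪≫
        (ShortComplex.homologyMapIso
          (M.isoSc' (-(n+1)) (-n) (-(n-1))
            (by simp [CochainComplex.prev]; ring) (by simp [CochainComplex.next]; ring))).op)).hom =
    (ShortComplex.homologyMapIso (e₁ A I N n) ≪≫
      ShortComplex.mapHomologyIso (SM A N n).op (YF A I) ≪≫
      (YF A I).mapIso ((SM A N n).homologyOpIso ≪≫
        (ShortComplex.homologyMapIso
          (N.isoSc' (-(n+1)) (-n) (-(n-1))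
            (by simp [CochainComplex.prev]; ring) (by simp [CochainComplex.next]; ring))).op)).hom ≫
      (YF A I).map (ShortComplex.homologyMap (ψZ A φ n)).op := by
  haveI := yfPH A I hI
  dsimp only [Iso.trans_hom, Functor.mapIso_hom]
  simp only [ShortComplex.homologyMapIso]
  rw [← Category.assoc, ← ShortComplex.homologyMap_comp, e₁_nat',
    ShortComplex.homologyMap_comp]
  simp only [Category.assoc]
  congr 1
  rw [ψY_nat_assoc A I hI]
  congr 1
  simp only [Iso.trans_hom, Iso.op_hom, Functor.map_comp, ← Category.assoc]
  rw [← Functor.map_comp, ShortComplex.homologyOpIso_hom_naturality (ψaux A φ n)]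
  simp only [Functor.map_comp, Category.assoc]
  congr 1
  rw [← Functor.map_comp, ← Functor.map_comp, ← op_comp, ← op_comp]
  congr 2
  simp only [← ShortComplex.homologyMap_comp]
  congr 1
  exact ((HomologicalComplex.natIsoSc' (ModuleCat.{u} A) (ComplexShape.up ℤ)
    (-(n+1)) (-n) (-(n-1)) (by simp [CochainComplex.prev]; ring)
    (by simp [CochainComplex.next]; ring)).hom.naturality φ).symm

lemma main_nat (I : ModuleCat.{u} A) (hI : Module.Injective A I)
    (M N : CochainComplex (ModuleCat.{u} A) ℤ) (φ : M ⟶ N) (n : ℤ) :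
    HomologicalComplex.homologyMap (homCplxMap A φ I) n ≫ (eIso A I hI M n).hom =
      (eIso A I hI N n).hom ≫ precompHom A (HomologicalComplex.homologyMap φ (-n)) I := by
  haveI := yfPH A I hI
  have hlast : precompHom A (HomologicalComplex.homologyMap φ (-n)) I =
      (YF A I).map ((HomologicalComplex.homologyMap φ (-n)).op) := rfl
  rw [hlast]
  exact main_nat_aux A I hI M N φ n

/-- For a ring `A`, an injective left `A`-module `I` and a cochain complex `M` of left
`A`-modules, there is an isomorphism `H^n(Hom_A(M, I)) ≅ Hom_A(H^{-n}(M), I)` for every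
`n ∈ ℤ`, natural in `M`. -/
theorem homology_homCplx_iso_hom_homology (I : ModuleCat.{u} A)
    (hI : Module.Injective A I) :
    ∃ e : ∀ (M : CochainComplex (ModuleCat.{u} A) ℤ) (n : ℤ),
        (homCplx A M I).homology n ≅ AddCommGrpCat.of ((M.homology (-n) : Type u) →ₗ[A] I),
      ∀ (M N : CochainComplex (ModuleCat.{u} A) ℤ) (φ : M ⟶ N) (n : ℤ),
        HomologicalComplex.homologyMap (homCplxMap A φ I) n ≫ (e M n).hom =
          (e N n).hom ≫ precompHom A (HomologicalComplex.homologyMap φ (-n)) I := by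
  exact ⟨fun M n => eIso A I hI M n, fun M N φ n => main_nat A I hI M N φ n⟩
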